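/- arXiv:1010.5816 — 2 statements merged into one kernel-verified Lean document; each statement's English description precedes it below -/
import Mathlib

section
/- For every positive integer m with m ≥ 3, exactly one of the following holds: m is odd, or m = 2⌊φn⌋+2 for some positive integer n, or m = 2⌊φ²n⌋+2 for some positive integer n; moreover the n in the latter two cases is unique. -/
noncomputable def goldenPhi : ℝ := (1 + Real.sqrt 5) / 2

lemma goldenPhi_eq : goldenPhi = Real.goldenRatio := rfl

lemma beatty_mem_iff {r : ℝ} (hr : 0 ≤ r) (k : ℕ) :
    ((k : ℤ) ∈ {x | ∃ j > 0, beattySeq r j = x}) ↔ ∃ n : ℕ, 0 < n ∧ k = ⌊r * n⌋₊ := by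
  constructor
  · rintro ⟨j, hj, hjk⟩
    refine ⟨j.toNat, by omega, ?_⟩
    have hjn : (j.toNat : ℤ) = j := Int.toNat_of_nonneg hj.le
    have h1 : (⌊r * (j.toNat : ℕ)⌋₊ : ℤ) = ⌊r * (j.toNat : ℕ)⌋ :=
      Int.natCast_floor_eq_floor (by positivity)
    have h2 : ((j.toNat : ℕ) : ℝ) = (j : ℝ) := by exact_mod_cast hjn
    rw [beattySeq] at hjk
    have : (⌊r * (j.toNat : ℕ)⌋₊ : ℤ) = (k : ℤ) := by
      rw [h1, h2, mul_comm, hjk]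
    exact_mod_cast this.symm
  · rintro ⟨n, hn, hk⟩
    refine ⟨(n : ℤ), by exact_mod_cast hn, ?_⟩
    have h1 : (⌊r * (n : ℕ)⌋₊ : ℤ) = ⌊r * (n : ℕ)⌋ :=
      Int.natCast_floor_eq_floor (by positivity)
    rw [beattySeq, show ((n : ℤ) : ℝ) = (n : ℝ) by norm_cast, mul_comm, ← h1, ← hk]

lemma beatty_inj {r : ℝ} (hr : 1 ≤ r) {n₁ n₂ : ℕ} (hn₁ : 0 < n₁) (hn₂ : 0 < n₂)
    (h : ⌊r * n₁⌋₊ = ⌊r * n₂⌋₊) : n₁ = n₂ := by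
  by_contra hne
  wlog hlt : n₁ < n₂ generalizing n₁ n₂
  · exact this hn₂ hn₁ h.symm (Ne.symm hne) (by omega)
  have key : (⌊r * n₁⌋₊ : ℝ) < ⌊r * n₂⌋₊ := by
    calc (⌊r * n₁⌋₊ : ℝ) ≤ r * n₁ := Nat.floor_le (by positivity)
    _ ≤ r * n₂ - 1 := by
        have : (n₁ : ℝ) + 1 ≤ n₂ := by exact_mod_cast hlt
        nlinarith [hr]
    _ < ⌊r * n₂⌋₊ := by linarith [Nat.lt_floor_add_one (r * n₂)]
  rw [h] at key
  exact lt_irrefl _ key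

/-- For every m ≥ 3, exactly one of: m is odd, m = 2⌊φn⌋+2 for some n ≥ 1,
or m = 2⌊φ²n⌋+2 for some n ≥ 1 holds; and the n is unique in the latter cases. -/
theorem odd_or_even_beatty :
    ∀ m : ℕ, 3 ≤ m →
      ((Odd m ∧ ¬(∃ n : ℕ, 0 < n ∧ m = 2 * ⌊goldenPhi * n⌋₊ + 2) ∧
          ¬(∃ n : ℕ, 0 < n ∧ m = 2 * ⌊goldenPhi ^ 2 * n⌋₊ + 2)) ∨
       (¬Odd m ∧ (∃ n : ℕ, 0 < n ∧ m = 2 * ⌊goldenPhi * n⌋₊ + 2) ∧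
          ¬(∃ n : ℕ, 0 < n ∧ m = 2 * ⌊goldenPhi ^ 2 * n⌋₊ + 2)) ∨
       (¬Odd m ∧ ¬(∃ n : ℕ, 0 < n ∧ m = 2 * ⌊goldenPhi * n⌋₊ + 2) ∧
          (∃ n : ℕ, 0 < n ∧ m = 2 * ⌊goldenPhi ^ 2 * n⌋₊ + 2))) ∧
      (∀ n₁ n₂ : ℕ, 0 < n₁ → 0 < n₂ →
        m = 2 * ⌊goldenPhi * n₁⌋₊ + 2 → m = 2 * ⌊goldenPhi * n₂⌋₊ + 2 → n₁ = n₂) ∧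
      (∀ n₁ n₂ : ℕ, 0 < n₁ → 0 < n₂ →
        m = 2 * ⌊goldenPhi ^ 2 * n₁⌋₊ + 2 → m = 2 * ⌊goldenPhi ^ 2 * n₂⌋₊ + 2 →
          n₁ = n₂) := by
  have hphi1 : (1 : ℝ) < goldenPhi := goldenPhi_eq ▸ Real.one_lt_goldenRatio
  have hphi0 : (0 : ℝ) ≤ goldenPhi := by linarith
  have hsq0 : (0 : ℝ) ≤ goldenPhi ^ 2 := by positivity
  have hsq1 : (1 : ℝ) ≤ goldenPhi ^ 2 := by nlinarith
  intro m hm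
  refine ⟨?_, ?_, ?_⟩
  · -- trichotomy
    by_cases hodd : Odd m
    · left
      refine ⟨hodd, ?_, ?_⟩ <;> rintro ⟨n, hn, heq⟩ <;>
        · rw [heq] at hodd; rw [Nat.odd_iff] at hodd; omega
    · -- m even, m ≥ 4
      have hconj : goldenPhi.HolderConjugate (goldenPhi ^ 2) := by
        rw [Real.holderConjugate_iff]; constructor
        · exact hphi1
        · have hg : goldenPhi ^ 2 = goldenPhi + 1 := goldenPhi_eq ▸ Real.goldenRatio_sq
          have hne : goldenPhi ≠ 0 := by linarith
          have hne2 : goldenPhi ^ 2 ≠ 0 := by positivity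
          field_simp
          nlinarith [hg]
      have hray := (goldenPhi_eq ▸ Real.goldenRatio_irrational :
        Irrational goldenPhi).beattySeq_symmDiff_beattySeq_pos hconj
      have hmeven : m % 2 = 0 := by
        rcases Nat.even_or_odd m with h | h
        · exact Nat.even_iff.mp h
        · exact absurd h hodd
      set k : ℕ := m / 2 - 1 with hk
      have hkpos : 0 < k := by omega
      have hmk : m = 2 * k + 2 := by omega
      have hmem : ((k : ℤ)) ∈ {x | 0 < x} := by
        simp; exact_mod_cast hkpos
      rw [← hray, Set.mem_symmDiff] at hmem
      have e1 : ((k : ℤ) ∈ {x | ∃ j > 0, beattySeq goldenPhi j = x}) ↔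
          ∃ n : ℕ, 0 < n ∧ m = 2 * ⌊goldenPhi * n⌋₊ + 2 := by
        rw [beatty_mem_iff hphi0]
        constructor
        · rintro ⟨n, hn, h⟩; exact ⟨n, hn, by omega⟩
        · rintro ⟨n, hn, h⟩; exact ⟨n, hn, by omega⟩
      have e2 : ((k : ℤ) ∈ {x | ∃ j > 0, beattySeq (goldenPhi ^ 2) j = x}) ↔
          ∃ n : ℕ, 0 < n ∧ m = 2 * ⌊goldenPhi ^ 2 * n⌋₊ + 2 := by
        rw [beatty_mem_iff hsq0]
        constructor
        · rintro ⟨n, hn, h⟩; exact ⟨n, hn, by omega⟩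
        · rintro ⟨n, hn, h⟩; exact ⟨n, hn, by omega⟩
      rcases hmem with ⟨h1, h2⟩ | ⟨h1, h2⟩
      · exact Or.inr (Or.inl ⟨hodd, e1.mp h1, fun h => h2 (e2.mpr h)⟩)
      · exact Or.inr (Or.inr ⟨hodd, fun h => h2 (e1.mpr h), e2.mp h1⟩)
  · intro n₁ n₂ h₁ h₂ he₁ he₂
    exact beatty_inj hphi1.le h₁ h₂ (by omega)
  · intro n₁ n₂ h₁ h₂ he₁ he₂
    exact beatty_inj hsq1 h₁ h₂ (by omega)
end

section
/- Let R₂ be as defined. For every position (x, 2x+1) with x ≥ 1, there is exactly one z with 0 ≤ z < 2x+1 such that (x, z) ∈ R₂ (i.e., exactly one vertical Wythoff Nim option of (x, 2x+1) lies in R₂). -/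
/-- The candidate set of P-positions of Blocking-2 Wythoff Nim. -/
def R2 : Set (ℕ × ℕ) :=
  {(0, 0)} ∪
  {p | ∃ n : ℕ, p = (n, 2 * n + 1) ∨ p = (2 * n + 1, n)} ∪
  {p | ∃ n : ℕ, p = (2 * ⌊goldenPhi * n⌋₊ + 2, 2 * ⌊goldenPhi ^ 2 * n⌋₊ + 2) ∨
                p = (2 * ⌊goldenPhi ^ 2 * n⌋₊ + 2, 2 * ⌊goldenPhi * n⌋₊ + 2)}



set_option linter.unnecessarySeqFocus false

lemma sqrt5_lt : (2:ℝ) < Real.sqrt 5 := by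
  nlinarith [Real.sq_sqrt (show (0:ℝ) ≤ 5 by norm_num), Real.sqrt_nonneg 5]

lemma phi_gt_one : 1 < goldenPhi := by
  have := sqrt5_lt; unfold goldenPhi; linarith

lemma phi_pos : 0 < goldenPhi := lt_trans one_pos phi_gt_one

lemma phi_sq : goldenPhi ^ 2 = goldenPhi + 1 := by
  have h := Real.sq_sqrt (show (0:ℝ) ≤ 5 by norm_num)
  unfold goldenPhi; nlinarith

lemma phi_irrational : Irrational goldenPhi := by
  have h5 : Irrational (Real.sqrt 5) := (by norm_num : Nat.Prime 5).irrational_sqrt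
  have h1 : Irrational ((1:ℚ) + Real.sqrt 5) := h5.ratCast_add 1
  have h2 : Irrational (((1:ℚ) + Real.sqrt 5) / (2:ℚ)) := h1.div_ratCast (by norm_num)
  unfold goldenPhi
  convert h2 using 2 <;> norm_num

lemma phi_conj : Real.HolderConjugate goldenPhi (goldenPhi ^ 2) := by
  rw [Real.holderConjugate_iff_eq_conjExponent phi_gt_one]
  have h1 : goldenPhi - 1 ≠ 0 := by have := phi_gt_one; linarith
  rw [eq_div_iff h1]
  linear_combination goldenPhi * phi_sq

lemma floor_phi_sq (n : ℕ) : ⌊goldenPhi ^ 2 * n⌋₊ = ⌊goldenPhi * n⌋₊ + n := by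
  have : goldenPhi ^ 2 * n = goldenPhi * n + n := by rw [phi_sq]; ring
  rw [this, Nat.floor_add_natCast (by have := phi_pos; positivity)]

lemma le_floor_phi (n : ℕ) : n ≤ ⌊goldenPhi * n⌋₊ := by
  apply Nat.le_floor
  calc (n:ℝ) = 1 * n := (one_mul _).symm
  _ ≤ goldenPhi * n := by apply mul_le_mul_of_nonneg_right phi_gt_one.le (by positivity)

lemma floor_phi_mono : StrictMono (fun n : ℕ => ⌊goldenPhi * n⌋₊) := by
  intro n m h
  have h1 : (⌊goldenPhi * n⌋₊ : ℝ) + 1 ≤ goldenPhi * m := by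
    have hf : (⌊goldenPhi * n⌋₊ : ℝ) ≤ goldenPhi * n :=
      Nat.floor_le (by have := phi_pos; positivity)
    have h2 : goldenPhi * n + goldenPhi ≤ goldenPhi * m := by
      have : (n:ℝ) + 1 ≤ m := by exact_mod_cast h
      nlinarith [phi_pos]
    nlinarith [phi_gt_one]
  have h2 := Nat.le_floor (α := ℝ) (n := ⌊goldenPhi * ↑n⌋₊ + 1) (a := goldenPhi * m)
    (by push_cast; linarith)
  simpa using h2

lemma floor_phi_pos {n : ℕ} (hn : 1 ≤ n) : 1 ≤ ⌊goldenPhi * n⌋₊ := by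
  calc 1 ≤ n := hn
  _ ≤ _ := le_floor_phi n

lemma beatty_nat (r : ℝ) (hr : 0 < r) (n : ℕ) : beattySeq r (n : ℤ) = (⌊r * n⌋₊ : ℤ) := by
  rw [beattySeq, Int.natCast_floor_eq_floor (by positivity), mul_comm]
  norm_num

lemma exist_rep (m : ℕ) : ∃ n : ℕ, m = ⌊goldenPhi * n⌋₊ ∨ m = ⌊goldenPhi ^ 2 * n⌋₊ := by
  rcases Nat.eq_zero_or_pos m with rfl | hm
  · exact ⟨0, Or.inl (by simp)⟩
  · have hsym := phi_irrational.beattySeq_symmDiff_beattySeq_pos phi_conj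
    have hmem : (m:ℤ) ∈ {n : ℤ | 0 < n} := by
      simp only [Set.mem_setOf_eq]; exact_mod_cast hm
    rw [← hsym, Set.mem_symmDiff] at hmem
    rcases hmem with ⟨⟨k, hk, hkm⟩, -⟩ | ⟨⟨k, hk, hkm⟩, -⟩
    · lift k to ℕ using hk.le with n
      refine ⟨n, Or.inl ?_⟩
      rw [beatty_nat goldenPhi phi_pos] at hkm
      exact_mod_cast hkm.symm
    · lift k to ℕ using hk.le with n
      refine ⟨n, Or.inr ?_⟩
      rw [beatty_nat (goldenPhi ^ 2) (by have := phi_pos; positivity)] at hkm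
      exact_mod_cast hkm.symm

lemma not_both {n n' : ℕ} (hn : 1 ≤ n) (hn' : 1 ≤ n') :
    ⌊goldenPhi * n⌋₊ ≠ ⌊goldenPhi ^ 2 * n'⌋₊ := by
  intro h
  have hm : 1 ≤ ⌊goldenPhi * n⌋₊ := floor_phi_pos hn
  have hsym := phi_irrational.beattySeq_symmDiff_beattySeq_pos phi_conj
  have hA : ((⌊goldenPhi * n⌋₊ : ℕ) : ℤ) ∈ {x : ℤ | ∃ k > 0, beattySeq goldenPhi k = x} :=
    ⟨n, by exact_mod_cast hn, by rw [beatty_nat goldenPhi phi_pos]⟩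
  have hB : ((⌊goldenPhi * n⌋₊ : ℕ) : ℤ) ∈ {x : ℤ | ∃ k > 0, beattySeq (goldenPhi ^ 2) k = x} :=
    ⟨n', by exact_mod_cast hn', by
      rw [beatty_nat (goldenPhi ^ 2) (by have := phi_pos; positivity)]; exact_mod_cast h.symm⟩
  have hmem : ((⌊goldenPhi * n⌋₊ : ℕ) : ℤ) ∈ {x : ℤ | 0 < x} := by
    simp only [Set.mem_setOf_eq]; exact_mod_cast hm
  rw [← hsym, Set.mem_symmDiff] at hmem
  tauto

lemma inj_phi {n n' : ℕ} (h : ⌊goldenPhi * n⌋₊ = ⌊goldenPhi * n'⌋₊) : n = n' :=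
  floor_phi_mono.injective h

lemma inj_phi2 {n n' : ℕ} (h : ⌊goldenPhi ^ 2 * n⌋₊ = ⌊goldenPhi ^ 2 * n'⌋₊) : n = n' := by
  rw [floor_phi_sq, floor_phi_sq] at h
  rcases lt_trichotomy n n' with hlt | heq | hgt
  · have h1 : ⌊goldenPhi * (n:ℕ)⌋₊ < ⌊goldenPhi * (n':ℕ)⌋₊ := floor_phi_mono hlt
    omega
  · exact heq
  · have h1 : ⌊goldenPhi * (n':ℕ)⌋₊ < ⌊goldenPhi * (n:ℕ)⌋₊ := floor_phi_mono hgt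
    omega

lemma mixed {n n' : ℕ} (h : ⌊goldenPhi * n⌋₊ = ⌊goldenPhi ^ 2 * n'⌋₊) : n = 0 ∧ n' = 0 := by
  rcases Nat.eq_zero_or_pos n with rfl | hn
  · simp only [Nat.cast_zero, mul_zero, Nat.floor_zero] at h
    have h2 := floor_phi_sq n'
    rcases Nat.eq_zero_or_pos n' with rfl | hn'
    · exact ⟨rfl, rfl⟩
    · have := floor_phi_pos hn'; omega
  · rcases Nat.eq_zero_or_pos n' with rfl | hn'
    · simp only [Nat.cast_zero, mul_zero, Nat.floor_zero] at h
      have := floor_phi_pos hn; omega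
    · exact absurd h (not_both hn hn')


lemma mem_R2_iff {x z : ℕ} : (x, z) ∈ R2 ↔
    ((x = 0 ∧ z = 0) ∨ (∃ n : ℕ, (x = n ∧ z = 2 * n + 1) ∨ (x = 2 * n + 1 ∧ z = n))) ∨
    (∃ n : ℕ, (x = 2 * ⌊goldenPhi * n⌋₊ + 2 ∧ z = 2 * ⌊goldenPhi ^ 2 * n⌋₊ + 2) ∨
              (x = 2 * ⌊goldenPhi ^ 2 * n⌋₊ + 2 ∧ z = 2 * ⌊goldenPhi * n⌋₊ + 2)) := by
  simp [R2, Set.mem_union, Set.mem_setOf_eq, Set.mem_singleton_iff, Prod.mk.injEq, Prod.ext_iff]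

lemma odd_case (k : ℕ) : ∃! z : ℕ, z < 2 * (2 * k + 1) + 1 ∧ ((2 * k + 1 : ℕ), z) ∈ R2 := by
  refine ⟨k, ⟨by omega, mem_R2_iff.mpr (Or.inl (Or.inr ⟨k, Or.inr ⟨rfl, rfl⟩⟩))⟩, ?_⟩
  rintro z ⟨hz, hmem⟩
  rcases mem_R2_iff.mp hmem with (⟨h1, h2⟩ | ⟨n, ⟨h1, h2⟩ | ⟨h1, h2⟩⟩) | ⟨n, ⟨h1, h2⟩ | ⟨h1, h2⟩⟩
  all_goals omega

lemma even_case (m : ℕ) : ∃! z : ℕ, z < 2 * (2 * m + 2) + 1 ∧ ((2 * m + 2 : ℕ), z) ∈ R2 := by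
  obtain ⟨n, hn | hn⟩ := exist_rep m
  · refine ⟨2 * ⌊goldenPhi ^ 2 * n⌋₊ + 2, ⟨?_, ?_⟩, ?_⟩
    · have h1 := floor_phi_sq n; have h2 := le_floor_phi n; omega
    · exact mem_R2_iff.mpr (Or.inr ⟨n, Or.inl ⟨by omega, rfl⟩⟩)
    · rintro z ⟨hz, hmem⟩
      rcases mem_R2_iff.mp hmem with
        (⟨h1, h2⟩ | ⟨n', ⟨h1, h2⟩ | ⟨h1, h2⟩⟩) | ⟨n', ⟨h1, h2⟩ | ⟨h1, h2⟩⟩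
      · omega
      · omega
      · omega
      · have he : n' = n := inj_phi (by omega)
        subst he; omega
      · have hmix : ⌊goldenPhi * (n:ℕ)⌋₊ = ⌊goldenPhi ^ 2 * (n':ℕ)⌋₊ := by omega
        obtain ⟨e1, e2⟩ := mixed hmix
        subst e1; subst e2
        simp only [Nat.cast_zero, mul_zero, Nat.floor_zero] at *
        omega
  · refine ⟨2 * ⌊goldenPhi * n⌋₊ + 2, ⟨?_, ?_⟩, ?_⟩
    · have h1 := floor_phi_sq n; have h2 := le_floor_phi n; omega
    · exact mem_R2_iff.mpr (Or.inr ⟨n, Or.inr ⟨by omega, rfl⟩⟩)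
    · rintro z ⟨hz, hmem⟩
      rcases mem_R2_iff.mp hmem with
        (⟨h1, h2⟩ | ⟨n', ⟨h1, h2⟩ | ⟨h1, h2⟩⟩) | ⟨n', ⟨h1, h2⟩ | ⟨h1, h2⟩⟩
      · omega
      · omega
      · omega
      · have hmix : ⌊goldenPhi * (n':ℕ)⌋₊ = ⌊goldenPhi ^ 2 * (n:ℕ)⌋₊ := by omega
        obtain ⟨e1, e2⟩ := mixed hmix
        subst e1; subst e2
        simp only [Nat.cast_zero, mul_zero, Nat.floor_zero] at *
        omega
      · have he : n' = n := inj_phi2 (by omega)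
        subst he; omega


/-- For every x ≥ 1, exactly one vertical option of (x, 2x+1) lies in R₂:
there is exactly one z with 0 ≤ z < 2x+1 and (x,z) ∈ R₂. -/
theorem R2_vertical_unique :
    ∀ x : ℕ, 1 ≤ x → ∃! z : ℕ, z < 2 * x + 1 ∧ (x, z) ∈ R2 := by
  intro x hx
  rcases Nat.even_or_odd x with ⟨k, hk⟩ | ⟨k, hk⟩
  · obtain ⟨m, rfl⟩ : ∃ m, x = 2 * m + 2 := ⟨k - 1, by omega⟩
    exact even_case m
  · obtain ⟨k', rfl⟩ : ∃ k', x = 2 * k' + 1 := ⟨k, by omega⟩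
    exact odd_case k'
end
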